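/- The multivariate skew-normal density integrates to 1: for any μ ∈ ℝ^p, positive definite Σ, λ ∈ ℝ^p, and λ₀ ∈ ℝ, the function f(x) = (1/Φ(λ₀/√(1+λᵀλ))) · φ_p(x; μ, Σ) · Φ(λ₀ + λᵀΣ^{-1/2}(x−μ)) is a probability density on ℝ^p. -/

import Mathlib

open MeasureTheory Matrix

noncomputable def stdNormalPDF (t : ℝ) : ℝ :=
  (Real.sqrt (2 * Real.pi))⁻¹ * Real.exp (-(t ^ 2) / 2)

noncomputable def stdNormalCDF (t : ℝ) : ℝ := ∫ y in Set.Iic t, stdNormalPDF y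

noncomputable def mvNormalPDF {p : ℕ} (μ : Fin p → ℝ) (Cov : Matrix (Fin p) (Fin p) ℝ)
    (x : Fin p → ℝ) : ℝ :=
  (Real.sqrt ((2 * Real.pi) ^ p * Cov.det))⁻¹ *
    Real.exp (-(1 / 2) * ((x - μ) ⬝ᵥ (Cov⁻¹ *ᵥ (x - μ))))

open Filter

lemma pdf_pos (t : ℝ) : 0 < stdNormalPDF t := by
  unfold stdNormalPDF
  positivity

lemma pdf_le (t : ℝ) : stdNormalPDF t ≤ (Real.sqrt (2 * Real.pi))⁻¹ := by
  unfold stdNormalPDF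
  nth_rewrite 2 [← mul_one (Real.sqrt (2*Real.pi))⁻¹]
  gcongr
  exact Real.exp_le_one_iff.2 (by nlinarith [sq_nonneg t])

lemma pdf_cont : Continuous stdNormalPDF := by
  unfold stdNormalPDF; fun_prop

lemma pdf_exp_eq : (fun t : ℝ => Real.exp (-(t ^ 2) / 2)) = fun t : ℝ => Real.exp (-(1/2) * t ^ 2) := by
  ext t; ring_nf

lemma pdf_integrable : Integrable stdNormalPDF := by
  unfold stdNormalPDF
  apply Integrable.const_mul
  rw [pdf_exp_eq]
  exact integrable_exp_neg_mul_sq (by norm_num)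

lemma pdf_integral : ∫ t, stdNormalPDF t = 1 := by
  unfold stdNormalPDF
  rw [MeasureTheory.integral_const_mul, pdf_exp_eq, integral_gaussian]
  have : Real.pi / (1/2) = 2 * Real.pi := by ring
  rw [this]
  exact inv_mul_cancel₀ (Real.sqrt_ne_zero'.2 (by positivity))

lemma cdf_nonneg (t : ℝ) : 0 ≤ stdNormalCDF t :=
  setIntegral_nonneg measurableSet_Iic (fun x _ => (pdf_pos x).le)

lemma cdf_le_one (t : ℝ) : stdNormalCDF t ≤ 1 := by
  rw [← pdf_integral]
  exact setIntegral_le_integral pdf_integrable (Filter.Eventually.of_forall (fun x => (pdf_pos x).le))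

lemma cdf_sub (a b : ℝ) : stdNormalCDF b - stdNormalCDF a = ∫ y in a..b, stdNormalPDF y := by
  have h := intervalIntegral.integral_Iic_sub_Iic (μ := volume) (f := stdNormalPDF)
    (pdf_integrable.integrableOn) (pdf_integrable.integrableOn) (a := a) (b := b)
  rw [stdNormalCDF, stdNormalCDF, h]

lemma cdf_pos (t : ℝ) : 0 < stdNormalCDF t := by
  have h := cdf_sub (t-1) t
  have h2 : 0 < ∫ y in (t-1)..t, stdNormalPDF y := by
    apply intervalIntegral.intervalIntegral_pos_of_pos_on pdf_integrable.intervalIntegrable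
    · exact fun x _ => pdf_pos x
    · linarith
  have := cdf_nonneg (t-1)
  linarith

lemma cdf_hasDeriv (t : ℝ) : HasDerivAt stdNormalCDF (stdNormalPDF t) t := by
  have key : ∀ u : ℝ, stdNormalCDF u = stdNormalCDF 0 + ∫ y in (0:ℝ)..u, stdNormalPDF y := by
    intro u; rw [← cdf_sub]; ring
  have : HasDerivAt (fun u => stdNormalCDF 0 + ∫ y in (0:ℝ)..u, stdNormalPDF y) (stdNormalPDF t) t := by
    apply HasDerivAt.const_add
    exact intervalIntegral.integral_hasDerivAt_right pdf_integrable.intervalIntegrable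
      pdf_integrable.aestronglyMeasurable.stronglyMeasurableAtFilter pdf_cont.continuousAt
  exact this.congr_of_eventuallyEq (Filter.Eventually.of_forall key) |>.congr_deriv rfl

lemma cdf_cont : Continuous stdNormalCDF :=
  continuous_iff_continuousAt.2 fun t => (cdf_hasDeriv t).continuousAt

lemma cdf_tendsto_atBot : Tendsto stdNormalCDF atBot (nhds 0) := by
  have : stdNormalCDF = fun t => ∫ y, (Set.Iic t).indicator stdNormalPDF y := by
    ext t
    rw [integral_indicator measurableSet_Iic]; rfl
  rw [this]
  have h0 : (0:ℝ) = ∫ y : ℝ, (0:ℝ) := by simp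
  rw [h0]
  apply tendsto_integral_filter_of_dominated_convergence stdNormalPDF
  · exact Eventually.of_forall fun t =>
      (pdf_cont.aestronglyMeasurable).indicator measurableSet_Iic
  · refine Eventually.of_forall fun t => Eventually.of_forall fun y => ?_
    rw [Real.norm_eq_abs, abs_of_nonneg (Set.indicator_nonneg (fun x _ => (pdf_pos x).le) y)]
    exact Set.indicator_le_self' (fun x _ => (pdf_pos x).le) y
  · exact pdf_integrable
  · refine Eventually.of_forall fun y => ?_
    have : ∀ᶠ t in atBot, (Set.Iic t).indicator stdNormalPDF y = 0 := by
      filter_upwards [eventually_lt_atBot y] with t ht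
      exact Set.indicator_of_notMem (by simpa using not_le.2 ht) _
    exact Tendsto.congr' (this.mono fun t h => h.symm) tendsto_const_nhds

-- gaussian "convolution" identity
lemma gauss_conv (a b : ℝ) :
    ∫ z, stdNormalPDF z * stdNormalPDF (a + b * z)
      = stdNormalPDF (a / Real.sqrt (1 + b^2)) / Real.sqrt (1 + b^2) := by
  have hc : (0:ℝ) < 1 + b^2 := by positivity
  set c : ℝ := 1 + b^2 with hcdef
  have key : ∀ z : ℝ, stdNormalPDF z * stdNormalPDF (a + b * z)
      = ((Real.sqrt (2*Real.pi))⁻¹)^2 * Real.exp (-(a^2)/(2*c)) *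
        Real.exp (-(c/2) * (z + a*b/c)^2) := by
    intro z
    unfold stdNormalPDF
    rw [mul_mul_mul_comm, ← pow_two, ← Real.exp_add, mul_assoc, ← Real.exp_add]
    congr 1
    congr 1
    have hc1 : (1 + b^2) ≠ 0 := by positivity
    rw [hcdef]
    field_simp
    ring
  simp_rw [key]
  rw [integral_const_mul]
  have shift : ∫ z:ℝ, Real.exp (-(c/2) * (z + a*b/c)^2) = ∫ z:ℝ, Real.exp (-(c/2) * z^2) := by
    exact integral_add_right_eq_self (fun z => Real.exp (-(c/2) * z^2)) (a*b/c)
  rw [shift, integral_gaussian]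
  unfold stdNormalPDF
  rw [div_pow, Real.sq_sqrt hc.le]
  have e2 : Real.pi / (c/2) = 2*Real.pi/c := by
    field_simp
  rw [e2, Real.sqrt_div (by positivity : (0:ℝ) ≤ 2*Real.pi)]
  have hs : Real.sqrt (2*Real.pi) ≠ 0 := Real.sqrt_ne_zero'.2 (by positivity)
  have hsc : Real.sqrt c ≠ 0 := Real.sqrt_ne_zero'.2 hc
  have e3 : -a^2/(2*c) = -(a^2/c)/2 := by field_simp
  rw [e3]
  field_simp

lemma integrand_integrable (a b : ℝ) :
    Integrable (fun z => stdNormalPDF z * stdNormalCDF (a + b * z)) := by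
  have hm : Continuous fun z => stdNormalPDF z * stdNormalCDF (a + b * z) := by
    have := cdf_cont; have := pdf_cont; fun_prop
  apply pdf_integrable.mono' hm.aestronglyMeasurable
  refine Eventually.of_forall fun z => ?_
  rw [Real.norm_eq_abs, abs_of_nonneg (mul_nonneg (pdf_pos z).le (cdf_nonneg _))]
  nth_rewrite 2 [← mul_one (stdNormalPDF z)]
  exact mul_le_mul_of_nonneg_left (cdf_le_one _) (pdf_pos z).le

lemma one_dim (b a : ℝ) :
    ∫ z, stdNormalPDF z * stdNormalCDF (a + b * z)
      = stdNormalCDF (a / Real.sqrt (1 + b^2)) := by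
  set G : ℝ → ℝ := fun a => ∫ z, stdNormalPDF z * stdNormalCDF (a + b * z) with hG
  set H : ℝ → ℝ := fun a => stdNormalCDF (a / Real.sqrt (1 + b^2)) with hH
  have hc : (0:ℝ) < 1 + b^2 := by positivity
  have hsc : (0:ℝ) < Real.sqrt (1 + b^2) := Real.sqrt_pos.2 hc
  have hGderiv : ∀ x : ℝ, HasDerivAt G (stdNormalPDF (x / Real.sqrt (1+b^2)) / Real.sqrt (1+b^2)) x := by
    intro x
    have key := hasDerivAt_integral_of_dominated_loc_of_deriv_le (μ := volume)
      (F := fun (a : ℝ) (z : ℝ) => stdNormalPDF z * stdNormalCDF (a + b * z))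
      (F' := fun (a : ℝ) (z : ℝ) => stdNormalPDF z * stdNormalPDF (a + b * z))
      (x₀ := x) (bound := fun z => stdNormalPDF z * (Real.sqrt (2 * Real.pi))⁻¹)
      (s := Metric.ball x 1) (Metric.ball_mem_nhds x one_pos)
      (Eventually.of_forall fun a =>
        (Continuous.aestronglyMeasurable (by have := cdf_cont; have := pdf_cont; fun_prop)))
      (integrand_integrable x b)
      (Continuous.aestronglyMeasurable (by have := pdf_cont; fun_prop))
      (Eventually.of_forall fun z => fun a _ => by
        rw [Real.norm_eq_abs, abs_of_nonneg (mul_nonneg (pdf_pos z).le (pdf_pos _).le)]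
        exact mul_le_mul_of_nonneg_left (pdf_le _) (pdf_pos z).le)
      (pdf_integrable.mul_const _)
      (Eventually.of_forall fun z => fun a _ => by
        have h1 : HasDerivAt (fun a : ℝ => a + b * z) 1 a := by
          simpa using (hasDerivAt_id a).add_const (b*z)
        have h2 := (cdf_hasDeriv (a + b*z)).comp a h1
        simpa using h2.const_mul (stdNormalPDF z))
    have hk := key.2
    rw [gauss_conv x b] at hk
    exact hk
  have hHderiv : ∀ x : ℝ, HasDerivAt H (stdNormalPDF (x / Real.sqrt (1+b^2)) / Real.sqrt (1+b^2)) x := by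
    intro x
    have h1 : HasDerivAt (fun a : ℝ => a / Real.sqrt (1+b^2)) (Real.sqrt (1+b^2))⁻¹ x := by
      simpa [div_eq_mul_inv] using (hasDerivAt_id x).mul_const (Real.sqrt (1+b^2))⁻¹
    have := (cdf_hasDeriv (x / Real.sqrt (1+b^2))).comp x h1
    exact this.congr_deriv (div_eq_mul_inv _ _).symm
  have hconst : ∀ x y : ℝ, G x - H x = G y - H y := by
    have : ∀ x : ℝ, HasDerivAt (fun a => G a - H a) 0 x := by
      intro x
      have h := (hGderiv x).sub (hHderiv x); rw [sub_self] at h; exact h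
    intro x y
    exact is_const_of_deriv_eq_zero (fun a => (this a).differentiableAt)
      (fun a => (this a).deriv) x y
  -- limits at -infty
  have hGlim : Tendsto G atBot (nhds 0) := by
    have h0 : (0:ℝ) = ∫ z : ℝ, (0:ℝ) := by simp
    rw [hG, h0]
    apply tendsto_integral_filter_of_dominated_convergence stdNormalPDF
    · exact Eventually.of_forall fun a =>
        (Continuous.aestronglyMeasurable (by have := cdf_cont; have := pdf_cont; fun_prop))
    · refine Eventually.of_forall fun a => Eventually.of_forall fun z => ?_
      rw [Real.norm_eq_abs, abs_of_nonneg (mul_nonneg (pdf_pos z).le (cdf_nonneg _))]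
      nth_rewrite 2 [← mul_one (stdNormalPDF z)]
      exact mul_le_mul_of_nonneg_left (cdf_le_one _) (pdf_pos z).le
    · exact pdf_integrable
    · refine Eventually.of_forall fun z => ?_
      have h1 : Tendsto (fun a : ℝ => a + b * z) atBot atBot := tendsto_atBot_add_const_right _ _ tendsto_id
      have := cdf_tendsto_atBot.comp h1
      simpa using (tendsto_const_nhds (x := stdNormalPDF z)).mul this
  have hHlim : Tendsto H atBot (nhds 0) := by
    have h1 : Tendsto (fun a : ℝ => a / Real.sqrt (1+b^2)) atBot atBot :=
      tendsto_id.atBot_div_const hsc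
    exact cdf_tendsto_atBot.comp h1
  have : G a - H a = 0 := by
    have hlim : Tendsto (fun x => G x - H x) atBot (nhds 0) := by
      simpa using hGlim.sub hHlim
    have hconst' : (fun x => G x - H x) = fun _ => G a - H a := funext fun x => hconst x a
    rw [hconst'] at hlim
    exact tendsto_nhds_unique tendsto_const_nhds hlim
  linarith [this]

lemma dot_self_nonneg {n : ℕ} (v : Fin n → ℝ) : 0 ≤ v ⬝ᵥ v :=
  Finset.sum_nonneg fun i _ => mul_self_nonneg (v i)

lemma pi_dim (p : ℕ) : ∀ (c : ℝ) (lam : Fin p → ℝ),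
    ∫ z : Fin p → ℝ, (∏ i, stdNormalPDF (z i)) * stdNormalCDF (c + lam ⬝ᵥ z)
      = stdNormalCDF (c / Real.sqrt (1 + lam ⬝ᵥ lam)) := by
  induction p with
  | zero =>
    intro c lam
    have h1 : ∀ z : Fin 0 → ℝ, (∏ i, stdNormalPDF (z i)) * stdNormalCDF (c + lam ⬝ᵥ z)
        = stdNormalCDF c := by
      intro z
      simp [dotProduct, Finset.univ_eq_empty]
    simp_rw [h1]
    have h2 : lam ⬝ᵥ lam = 0 := by simp [dotProduct, Finset.univ_eq_empty]
    rw [h2]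
    simp [volume_pi, integral_const, Measure.real, Measure.pi_univ]
  | succ n ih =>
    intro c lam
    set k : ℝ := 1 + (lam 0)^2 with hk
    have hkpos : (0:ℝ) < k := by positivity
    have hks : (0:ℝ) < Real.sqrt k := Real.sqrt_pos.2 hkpos
    have step1 : ∫ z : Fin (n+1) → ℝ, (∏ i, stdNormalPDF (z i)) * stdNormalCDF (c + lam ⬝ᵥ z)
        = ∫ x : ℝ × (Fin n → ℝ), (stdNormalPDF x.1 * ∏ i : Fin n, stdNormalPDF (x.2 i)) *
            stdNormalCDF (c + (lam 0 * x.1 + (fun i : Fin n => lam i.succ) ⬝ᵥ x.2)) := by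
      rw [volume_pi, ← ((measurePreserving_piFinSuccAbove
        (fun _ : Fin (n+1) => (volume : Measure ℝ)) 0).symm).integral_comp']
      congr 1
      ext x
      simp only [MeasurableEquiv.piFinSuccAbove_symm_apply, Fin.insertNthEquiv,
        Equiv.coe_fn_mk, Fin.insertNth_zero, Fin.prod_univ_succ, Fin.cons_zero, Fin.cons_succ,
        Fin.zero_succAbove, Fin.succAbove_zero, cast_eq]
      congr 2
      rw [dotProduct, Fin.sum_univ_succ]
      simp [dotProduct, mul_comm]
    rw [step1]
    have hcont : Continuous fun x : ℝ × (Fin n → ℝ) =>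
        (stdNormalPDF x.1 * ∏ i : Fin n, stdNormalPDF (x.2 i)) *
          stdNormalCDF (c + (lam 0 * x.1 + (fun i : Fin n => lam i.succ) ⬝ᵥ x.2)) := by
      have h1 := pdf_cont; have h2 := cdf_cont
      apply Continuous.mul
      · exact (h1.comp continuous_fst).mul
          (continuous_finset_prod _ fun i _ => h1.comp ((continuous_apply i).comp continuous_snd))
      · apply h2.comp
        apply Continuous.add continuous_const
        apply Continuous.add (continuous_const.mul continuous_fst)
        simp only [dotProduct]
        exact continuous_finset_sum _ fun i _ =>
          continuous_const.mul ((continuous_apply i).comp continuous_snd)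
    have hbound : Integrable (fun x : ℝ × (Fin n → ℝ) =>
        stdNormalPDF x.1 * ∏ i : Fin n, stdNormalPDF (x.2 i)) := by
      exact Integrable.mul_prod pdf_integrable
        (Integrable.fin_nat_prod fun i => pdf_integrable)
    have hint : Integrable (fun x : ℝ × (Fin n → ℝ) =>
        (stdNormalPDF x.1 * ∏ i : Fin n, stdNormalPDF (x.2 i)) *
          stdNormalCDF (c + (lam 0 * x.1 + (fun i : Fin n => lam i.succ) ⬝ᵥ x.2))) := by
      apply hbound.mono' hcont.aestronglyMeasurable
      refine Eventually.of_forall fun x => ?_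
      have h1 : 0 ≤ stdNormalPDF x.1 * ∏ i : Fin n, stdNormalPDF (x.2 i) :=
        mul_nonneg (pdf_pos _).le (Finset.prod_nonneg fun i _ => (pdf_pos _).le)
      rw [Real.norm_eq_abs, abs_of_nonneg (mul_nonneg h1 (cdf_nonneg _))]
      nth_rewrite 2 [← mul_one (stdNormalPDF x.1 * ∏ i : Fin n, stdNormalPDF (x.2 i))]
      exact mul_le_mul_of_nonneg_left (cdf_le_one _) h1
    rw [Measure.volume_eq_prod, integral_prod_symm _ hint]
    have step2 : ∀ w : Fin n → ℝ,
        (∫ t : ℝ, (stdNormalPDF t * ∏ i : Fin n, stdNormalPDF (w i)) *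
          stdNormalCDF (c + (lam 0 * t + (fun i : Fin n => lam i.succ) ⬝ᵥ w)))
        = (∏ i : Fin n, stdNormalPDF (w i)) *
            stdNormalCDF (c / Real.sqrt k + (fun i : Fin n => lam i.succ / Real.sqrt k) ⬝ᵥ w) := by
      intro w
      have harr : ∀ t : ℝ, (stdNormalPDF t * ∏ i : Fin n, stdNormalPDF (w i)) *
          stdNormalCDF (c + (lam 0 * t + (fun i : Fin n => lam i.succ) ⬝ᵥ w))
          = (∏ i : Fin n, stdNormalPDF (w i)) *
            (stdNormalPDF t * stdNormalCDF ((c + (fun i : Fin n => lam i.succ) ⬝ᵥ w) + lam 0 * t)) := by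
        intro t
        have : c + (lam 0 * t + (fun i : Fin n => lam i.succ) ⬝ᵥ w)
            = (c + (fun i : Fin n => lam i.succ) ⬝ᵥ w) + lam 0 * t := by ring
        rw [this]; ring
      simp_rw [harr]
      rw [integral_const_mul, one_dim (lam 0) (c + (fun i : Fin n => lam i.succ) ⬝ᵥ w)]
      congr 2
      rw [← hk, add_div, dotProduct, dotProduct, Finset.sum_div]
      congr 1
      exact Finset.sum_congr rfl fun i _ => by ring
    simp_rw [step2]
    rw [ih (c / Real.sqrt k) (fun i : Fin n => lam i.succ / Real.sqrt k)]
    congr 1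
    have hdot : (fun i : Fin n => lam i.succ / Real.sqrt k) ⬝ᵥ (fun i : Fin n => lam i.succ / Real.sqrt k)
        = ((fun i : Fin n => lam i.succ) ⬝ᵥ (fun i : Fin n => lam i.succ)) / k := by
      rw [dotProduct, dotProduct, Finset.sum_div]
      refine Finset.sum_congr rfl fun i _ => ?_
      rw [div_mul_div_comm, Real.mul_self_sqrt hkpos.le]
    rw [hdot]
    have hlam : lam ⬝ᵥ lam = (lam 0)^2 + (fun i : Fin n => lam i.succ) ⬝ᵥ (fun i : Fin n => lam i.succ) := by
      rw [dotProduct, Fin.sum_univ_succ, dotProduct, sq]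
    set s : ℝ := (fun i : Fin n => lam i.succ) ⬝ᵥ (fun i : Fin n => lam i.succ) with hs
    have hsnn : 0 ≤ s := dot_self_nonneg _
    rw [hlam, div_div]
    congr 1
    rw [← Real.sqrt_mul hkpos.le]
    congr 1
    field_simp
    ring

/-- The multivariate skew-normal density integrates to 1. Here `S` is the symmetric
positive-definite square root of `Cov`, so `S⁻¹ = Cov^{-1/2}`. -/
theorem msn_is_probability_density {p : ℕ} (μ lam : Fin p → ℝ) (lam0 : ℝ)
    (Cov S : Matrix (Fin p) (Fin p) ℝ) (hCov : Cov.PosDef) (hS : S.PosDef)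
    (hSS : S * S = Cov) :
    (∀ x : Fin p → ℝ,
        0 ≤ (stdNormalCDF (lam0 / Real.sqrt (1 + lam ⬝ᵥ lam)))⁻¹ * mvNormalPDF μ Cov x *
            stdNormalCDF (lam0 + lam ⬝ᵥ (S⁻¹ *ᵥ (x - μ)))) ∧
      ∫ x : Fin p → ℝ,
          (stdNormalCDF (lam0 / Real.sqrt (1 + lam ⬝ᵥ lam)))⁻¹ * mvNormalPDF μ Cov x *
            stdNormalCDF (lam0 + lam ⬝ᵥ (S⁻¹ *ᵥ (x - μ))) = 1 := by
  have hdetS : 0 < S.det := hS.det_pos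
  have hdetS' : IsUnit S.det := (hdetS.ne').isUnit
  have hsymm : Sᵀ = S := by
    have := hS.isHermitian
    rwa [Matrix.IsHermitian, Matrix.conjTranspose_eq_transpose_of_trivial] at this
  set c : ℝ := stdNormalCDF (lam0 / Real.sqrt (1 + lam ⬝ᵥ lam)) with hc
  have hcpos : 0 < c := cdf_pos _
  have mvnonneg : ∀ x, 0 ≤ mvNormalPDF μ Cov x := by
    intro x
    unfold mvNormalPDF
    positivity
  constructor
  · intro x
    exact mul_nonneg (mul_nonneg (inv_nonneg.2 hcpos.le) (mvnonneg x)) (cdf_nonneg _)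
  -- The integral
  set g : (Fin p → ℝ) → ℝ := fun x =>
    mvNormalPDF μ Cov x * stdNormalCDF (lam0 + lam ⬝ᵥ (S⁻¹ *ᵥ (x - μ))) with hg
  have harr : ∀ x : Fin p → ℝ,
      c⁻¹ * mvNormalPDF μ Cov x * stdNormalCDF (lam0 + lam ⬝ᵥ (S⁻¹ *ᵥ (x - μ)))
        = c⁻¹ * g x := fun x => by rw [hg]; ring
  simp_rw [harr]
  rw [integral_const_mul]
  -- change of variables
  have hgcont : Continuous g := by
    apply Continuous.mul
    · unfold mvNormalPDF
      apply continuous_const.mul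
      apply Real.continuous_exp.comp
      apply continuous_const.mul
      exact ((continuous_id.sub continuous_const).dotProduct
        (continuous_const.matrix_mulVec (continuous_id.sub continuous_const)))
    · apply cdf_cont.comp
      apply continuous_const.add
      exact continuous_const.dotProduct
        (continuous_const.matrix_mulVec (continuous_id.sub continuous_const))
  have key : ∫ z : Fin p → ℝ, g (Matrix.toLin' S z + μ) = (S.det)⁻¹ * ∫ x, g x := by
    have hmap := Real.map_matrix_volume_pi_eq_smul_volume_pi (M := S) hdetS.ne'
    have hmble : Measurable (Matrix.toLin' S) :=
      (LinearMap.continuous_on_pi _).measurable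
    rw [← MeasureTheory.integral_add_right_eq_self (fun x => g x) μ]
    calc ∫ z, g (Matrix.toLin' S z + μ)
        = ∫ x, g (x + μ) ∂(Measure.map (Matrix.toLin' S) volume) := by
          rw [integral_map hmble.aemeasurable]
          rw [hmap]
          exact (hgcont.comp (continuous_id.add continuous_const)).aestronglyMeasurable.smul_measure _
      _ = (S.det)⁻¹ * ∫ x, g (x + μ) := by
          rw [hmap, integral_smul_measure]
          congr 1
          rw [ENNReal.toReal_ofReal (abs_nonneg _), abs_inv, abs_of_pos hdetS]
  -- compute g on the transformed points
  have hSinv : ∀ z : Fin p → ℝ, S⁻¹ *ᵥ (S *ᵥ z) = z := by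
    intro z
    rw [Matrix.mulVec_mulVec, Matrix.nonsing_inv_mul S hdetS', Matrix.one_mulVec]
  have hgval : ∀ z : Fin p → ℝ,
      g (Matrix.toLin' S z + μ)
        = (S.det)⁻¹ * ((∏ i, stdNormalPDF (z i)) * stdNormalCDF (lam0 + lam ⬝ᵥ z)) := by
    intro z
    have hquad : (S *ᵥ z) ⬝ᵥ (Cov⁻¹ *ᵥ (S *ᵥ z)) = z ⬝ᵥ z := by
      rw [← hSS, Matrix.mul_inv_rev, ← Matrix.mulVec_mulVec, hSinv z, dotProduct_mulVec,
        ← Matrix.mulVec_transpose, Matrix.transpose_nonsing_inv, hsymm, hSinv z]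
    have hdet : Cov.det = S.det * S.det := by rw [← hSS, Matrix.det_mul]
    rw [hg]
    unfold mvNormalPDF
    simp only [Matrix.toLin'_apply, add_sub_cancel_right]
    rw [hSinv z, hquad, hdet]
    have hsqrt : Real.sqrt ((2 * Real.pi) ^ p * (S.det * S.det))
        = Real.sqrt ((2 * Real.pi) ^ p) * S.det := by
      rw [Real.sqrt_mul (by positivity), Real.sqrt_mul_self hdetS.le]
    rw [hsqrt]
    have hprod : (∏ i, stdNormalPDF (z i))
        = (Real.sqrt ((2 * Real.pi) ^ p))⁻¹ * Real.exp (-(1/2) * (z ⬝ᵥ z)) := by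
      unfold stdNormalPDF
      rw [Finset.prod_mul_distrib, Finset.prod_const, ← Real.exp_sum]
      have h1 : Real.sqrt ((2 * Real.pi) ^ p) = (Real.sqrt (2 * Real.pi)) ^ p := by
        rw [show ((2 * Real.pi) ^ p) = ((Real.sqrt (2 * Real.pi)) ^ p) ^ 2 by
          rw [← pow_mul, mul_comm p 2, pow_mul, Real.sq_sqrt (by positivity)],
          Real.sqrt_sq (by positivity)]
      rw [h1, ← inv_pow]
      rw [Finset.card_univ, Fintype.card_fin]
      congr 1
      rw [show z ⬝ᵥ z = ∑ i : Fin p, z i * z i from rfl, Finset.mul_sum]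
      congr 1
      exact Finset.sum_congr rfl fun i _ => by ring
    rw [hprod]
    rw [mul_inv]
    ring
  have : ∫ x, g x = c := by
    have h1 : ∫ z : Fin p → ℝ, g (Matrix.toLin' S z + μ)
        = (S.det)⁻¹ * ∫ z : Fin p → ℝ,
            (∏ i, stdNormalPDF (z i)) * stdNormalCDF (lam0 + lam ⬝ᵥ z) := by
      simp_rw [hgval]
      rw [integral_const_mul]
    rw [key] at h1
    have h2 := pi_dim p lam0 lam
    rw [h2] at h1
    have := mul_left_cancel₀ (inv_ne_zero hdetS.ne') h1
    rw [this, hc]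
  rw [this]
  exact inv_mul_cancel₀ hcpos.ne'
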